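/- Let A be a unital Banach algebra and X a unit-linked Banach A-bimodule. Let p < 1 and θ ≥ 0. Suppose f : A → X satisfies f(0) = 0 and g : A → X satisfies g(0) = g(1) = 0, such that ‖f(a + λb + c²) − f(a) − λf(b) − c·f(c) − g(c)·c‖ ≤ θ‖f(c)‖ and ‖g(λab + λc) − λa·g(b) − λ·g(a)·b − λg(c)‖ ≤ θ(‖a‖^p + ‖b‖^p + ‖c‖^p) for all a, b, c ∈ A and all λ ∈ ℂ with |λ| = 1. Then f is a generalized Jordan derivation: f is ℂ-linear and there exists a Jordan derivation δ : A → X with f(a²) = a·f(a) + δ(a)·a for all a ∈ A. -/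

import Mathlib

open Filter Topology MulOpposite

set_option maxHeartbeats 1000000

private lemma exists_unit_pair (z : ℂ) (hz : ‖z‖ ≤ 1) :
    ∃ μ₁ μ₂ : ℂ, ‖μ₁‖ = 1 ∧ ‖μ₂‖ = 1 ∧ μ₁ + μ₂ = 2 * z := by
  rcases eq_or_ne z 0 with rfl | hz0
  · exact ⟨1, -1, by simp, by simp, by ring⟩
  · set r : ℝ := ‖z‖ with hr
    have hr0 : 0 < r := norm_pos_iff.mpr hz0
    set t : ℝ := Real.sqrt (1 - r ^ 2) with ht
    have ht0 : 0 ≤ 1 - r ^ 2 := by nlinarith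
    have ht2 : t ^ 2 = 1 - r ^ 2 := Real.sq_sqrt ht0
    have hu : ‖(z / (r : ℂ))‖ = 1 := by
      rw [norm_div, Complex.norm_real]
      simp [hr, Real.norm_of_nonneg hr0.le]
      exact hz0
    have hw : ‖((r : ℂ) + t * Complex.I)‖ = 1 := by
      rw [Complex.norm_def, Complex.normSq_add_mul_I]
      rw [show r ^ 2 + t ^ 2 = 1 by rw [ht2]; ring]
      exact Real.sqrt_one
    have hw' : ‖((r : ℂ) - t * Complex.I)‖ = 1 := by
      have : (r : ℂ) - t * Complex.I = (r : ℂ) + (-t : ℝ) * Complex.I := by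
        push_cast; ring
      rw [this, Complex.norm_def, Complex.normSq_add_mul_I]
      rw [show r ^ 2 + (-t) ^ 2 = 1 by rw [show (-t)^2 = t^2 by ring, ht2]; ring]
      exact Real.sqrt_one
    refine ⟨(z / r) * ((r : ℂ) + t * Complex.I), (z / r) * ((r : ℂ) - t * Complex.I), ?_, ?_, ?_⟩
    · rw [norm_mul, hu, hw, one_mul]
    · rw [norm_mul, hu, hw', one_mul]
    · have hrne : (r : ℂ) ≠ 0 := by exact_mod_cast hr0.ne'
      field_simp
      ring

private lemma clinear_of_unit {V W : Type*} [AddCommGroup V] [Module ℂ V]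
    [AddCommGroup W] [Module ℂ W]
    (q : V → W) (hadd : ∀ x y, q (x + y) = q x + q y)
    (hunit : ∀ (μ : ℂ), ‖μ‖ = 1 → ∀ x, q (μ • x) = μ • q x) (μ : ℂ) (x : V) :
    q (μ • x) = μ • q x := by
  have h0 : q 0 = 0 := by
    have h := hadd 0 0
    rw [add_zero] at h
    exact (add_eq_left.mp h.symm)
  have hsmall : ∀ (ν : ℂ), ‖ν‖ ≤ 1 → ∀ y, q (ν • y) = ν • q y := by
    intro ν hν y
    obtain ⟨μ₁, μ₂, hm1, hm2, hsum⟩ := exists_unit_pair ν hν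
    have e1 : q (ν • y) + q (ν • y) = (μ₁ + μ₂) • q y := by
      calc q (ν • y) + q (ν • y) = q (ν • y + ν • y) := (hadd _ _).symm
        _ = q (μ₁ • y + μ₂ • y) := by
              rw [← add_smul, ← add_smul, hsum, two_mul]
        _ = μ₁ • q y + μ₂ • q y := by rw [hadd, hunit μ₁ hm1, hunit μ₂ hm2]
        _ = (μ₁ + μ₂) • q y := (add_smul _ _ _).symm
    rw [hsum] at e1
    have e2 : (2 : ℂ) • q (ν • y) = (2 : ℂ) • (ν • q y) := by
      rw [two_smul, e1, ← smul_smul]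
    have := congrArg (fun w => (2 : ℂ)⁻¹ • w) e2
    simpa [smul_smul] using this
  rcases eq_or_ne μ 0 with rfl | hμ0
  · simp [h0]
  · set n : ℕ := ⌈‖μ‖⌉₊ with hn
    have hn0 : 0 < n := Nat.ceil_pos.mpr (norm_pos_iff.mpr hμ0)
    have hnle : ‖μ‖ ≤ (n : ℝ) := Nat.le_ceil _
    have hnne : (n : ℂ) ≠ 0 := by exact_mod_cast hn0.ne'
    have hdiv : ‖μ / (n : ℂ)‖ ≤ 1 := by
      rw [norm_div]
      rw [div_le_one (by exact_mod_cast hn0)]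
      simpa using hnle
    have hnsmul : ∀ (k : ℕ) (y : V), q ((k : ℂ) • y) = (k : ℂ) • q y := by
      intro k
      induction k with
      | zero => intro y; simp [h0]
      | succ m ih =>
          intro y
          have : ((m + 1 : ℕ) : ℂ) • y = (m : ℂ) • y + y := by
            push_cast; rw [add_smul, one_smul]
          rw [this, hadd, ih]
          push_cast
          rw [add_smul, one_smul]
    have key : μ • x = (n : ℂ) • ((μ / n) • x) := by
      rw [smul_smul, mul_div_cancel₀ _ hnne]
    rw [key, hnsmul, hsmall _ hdiv, smul_smul, mul_div_cancel₀ _ hnne]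

private lemma tendsto_of_sub {Y : Type*} [NormedAddCommGroup Y] {u v : ℕ → Y} {L : Y} {b : ℕ → ℝ}
    (hu : Tendsto u atTop (𝓝 L)) (hb : Tendsto b atTop (𝓝 0))
    (h : ∀ n, ‖v n - u n‖ ≤ b n) : Tendsto v atTop (𝓝 L) := by
  have h1 : Tendsto (fun n => v n - u n) atTop (𝓝 0) := by
    rw [tendsto_zero_iff_norm_tendsto_zero]
    exact squeeze_zero (fun n => norm_nonneg _) h hb
  have h2 := h1.add hu
  simpa using h2

private lemma tendsto_bound (c1 c2 Q B : ℝ) (hB : 1 < B) (hQ : Q < B) (hQ0 : 0 ≤ Q) :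
    Tendsto (fun n : ℕ => ((B : ℝ) ^ n)⁻¹ * (c1 + c2 * Q ^ n)) atTop (𝓝 0) := by
  have hB0 : (0:ℝ) < B := lt_trans one_pos hB
  have e : ∀ n : ℕ, ((B : ℝ) ^ n)⁻¹ * (c1 + c2 * Q ^ n) = c1 * (B⁻¹) ^ n + c2 * (Q / B) ^ n := by
    intro n
    rw [inv_pow, div_pow]
    field_simp
  have l1 : Tendsto (fun n : ℕ => c1 * (B⁻¹) ^ n) atTop (𝓝 0) := by
    have h := tendsto_pow_atTop_nhds_zero_of_lt_one (r := B⁻¹) (by positivity)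
      (by rw [inv_lt_one_iff₀]; right; exact hB)
    simpa using h.const_mul c1
  have l2 : Tendsto (fun n : ℕ => c2 * (Q / B) ^ n) atTop (𝓝 0) := by
    have h := tendsto_pow_atTop_nhds_zero_of_lt_one (r := Q / B) (by positivity)
      (by rw [div_lt_one hB0]; exact hQ)
    simpa using h.const_mul c2
  have := l1.add l2
  simp only [add_zero] at this
  exact this.congr (fun n => (e n).symm)

set_option linter.unusedSectionVars false
set_option linter.unusedVariables false

section

variable {A X : Type*}
  [NormedRing A] [NormedAlgebra ℂ A] [CompleteSpace A]
  [NormedAddCommGroup X] [NormedSpace ℂ X] [CompleteSpace X]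
  [Module A X] [Module Aᵐᵒᵖ X]
  [IsBoundedSMul A X] [IsBoundedSMul Aᵐᵒᵖ X]
  [SMulCommClass A Aᵐᵒᵖ X]
  [IsScalarTower ℂ A X] [IsScalarTower ℂ Aᵐᵒᵖ X]

/-- A Jordan derivation from `A` into the bimodule `X`: a `ℂ`-linear map `δ` with
`δ(a²) = a·δ(a) + δ(a)·a`. -/
def IsJordanDeriv (δ : A → X) : Prop :=
  (∀ x y : A, δ (x + y) = δ x + δ y) ∧ (∀ (μ : ℂ) (x : A), δ (μ • x) = μ • δ x) ∧
    ∀ a : A, δ (a ^ 2) = a • δ a + op a • δ a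

/-- A generalized Jordan derivation: a `ℂ`-linear map `d` such that there is a Jordan
derivation `δ` with `d(a²) = a·d(a) + δ(a)·a`. -/
def IsGenJordanDeriv (d : A → X) : Prop :=
  (∀ x y : A, d (x + y) = d x + d y) ∧ (∀ (μ : ℂ) (x : A), d (μ • x) = μ • d x) ∧
    ∃ δ : A → X, IsJordanDeriv δ ∧ ∀ a : A, d (a ^ 2) = a • d a + op a • δ a

theorem stmt (f g : A → X) (θ p : ℝ) (hθ : 0 ≤ θ) (hp : p < 1)
    (hf0 : f 0 = 0) (hg0 : g 0 = 0) (hg1 : g 1 = 0)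
    (h1 : ∀ (a b c : A) (μ : ℂ), ‖μ‖ = 1 →
      ‖f (a + μ • b + c ^ 2) - f a - μ • f b - c • f c - op c • g c‖ ≤ θ * ‖f c‖)
    (h2 : ∀ (a b c : A) (μ : ℂ), ‖μ‖ = 1 →
      ‖g (μ • (a * b) + μ • c) - μ • a • g b - μ • op b • g a - μ • g c‖ ≤
        θ * (‖a‖ ^ p + ‖b‖ ^ p + ‖c‖ ^ p)) :
    IsGenJordanDeriv f := by
  classical
  -- commutation helpers
  have hcomm : ∀ (μ : ℂ) (a : A) (w : X), a • (μ • w) = μ • (a • w) := by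
    intro μ a w
    have h1 : μ • w = ((μ • (1:A))) • w := by rw [smul_assoc, one_smul]
    rw [h1, ← mul_smul, mul_smul_comm, mul_one, smul_assoc]
  have hcommop : ∀ (μ : ℂ) (a : Aᵐᵒᵖ) (w : X), a • (μ • w) = μ • (a • w) := by
    intro μ a w
    have h1 : μ • w = ((μ • (1:Aᵐᵒᵖ))) • w := by rw [smul_assoc, one_smul]
    rw [h1, ← mul_smul, mul_smul_comm, mul_one, smul_assoc]
  -- constants
  set Q : ℝ := (2:ℝ) ^ p with hQdef
  have hQ0 : 0 < Q := Real.rpow_pos_of_pos two_pos p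
  have hQ2 : Q < 2 := by
    have h := Real.rpow_lt_rpow_of_exponent_lt (x := (2:ℝ)) one_lt_two hp
    simpa [Real.rpow_one] using h
  have hn2 : ‖(2:ℂ)‖ = 2 := by norm_num
  have hnorm2n : ∀ n : ℕ, ‖(2:ℂ) ^ n‖ = 2 ^ n := by intro n; rw [norm_pow, hn2]
  have hscale : ∀ (n : ℕ) (a : A), ‖(2:ℂ) ^ n • a‖ ^ p = Q ^ n * ‖a‖ ^ p := by
    intro n a
    rw [norm_smul, hnorm2n]
    rw [Real.mul_rpow (by positivity) (norm_nonneg _)]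
    congr 1
    rw [← Real.rpow_natCast (2:ℝ) n, ← Real.rpow_natCast Q n, hQdef,
        ← Real.rpow_mul (by norm_num), ← Real.rpow_mul (by norm_num), mul_comm]
  have hC1 : (0:ℝ) ≤ ‖(1:A)‖ ^ p := Real.rpow_nonneg (norm_nonneg _) p
  have hZ : (0:ℝ) ≤ (0:ℝ) ^ p := Real.rpow_nonneg le_rfl p
  -- linearity of f
  have hfadd : ∀ x y : A, f (x + y) = f x + f y := by
    intro x y
    have h := h1 x y 0 1 (by norm_num)
    simp only [one_smul, ne_eq, OfNat.ofNat_ne_zero, not_false_eq_true, zero_pow, add_zero,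
      zero_smul, hf0, hg0, op_zero, smul_zero, sub_zero, norm_zero, mul_zero] at h
    have h0 := norm_le_zero_iff.mp h
    rw [sub_sub, sub_eq_zero] at h0
    exact h0
  have hfunit : ∀ (μ : ℂ), ‖μ‖ = 1 → ∀ x : A, f (μ • x) = μ • f x := by
    intro μ hμ x
    have h := h1 0 x 0 μ hμ
    simp only [ne_eq, OfNat.ofNat_ne_zero, not_false_eq_true, zero_pow, add_zero, zero_add,
      zero_smul, hf0, hg0, op_zero, smul_zero, sub_zero, norm_zero, mul_zero] at h
    have h0 := norm_le_zero_iff.mp h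
    rw [sub_eq_zero] at h0
    exact h0
  have hflin : ∀ (μ : ℂ) (x : A), f (μ • x) = μ • f x :=
    fun μ x => clinear_of_unit f hfadd hfunit μ x
  -- g estimates
  have hgadd : ∀ x y : A, ‖g (x + y) - g x - g y‖ ≤ θ * (‖(1:A)‖ ^ p + ‖x‖ ^ p + ‖y‖ ^ p) := by
    intro x y
    have h := h2 1 x y 1 (by norm_num)
    simpa [hg1] using h
  have hgmu : ∀ (μ : ℂ), ‖μ‖ = 1 → ∀ c : A,
      ‖g (μ • c) - μ • g c‖ ≤ θ * ((0:ℝ) ^ p + (0:ℝ) ^ p + ‖c‖ ^ p) := by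
    intro μ hμ c
    have h := h2 0 0 c μ hμ
    simpa [hg0] using h
  have hgjordan : ∀ x : A,
      ‖g (x * x) - x • g x - op x • g x‖ ≤ θ * (‖x‖ ^ p + ‖x‖ ^ p + (0:ℝ) ^ p) := by
    intro x
    have h := h2 x x 0 1 (by norm_num)
    simpa [hg0] using h
  -- the approximating sequence
  set s : ℕ → A → X := fun n a => ((2:ℂ) ^ n)⁻¹ • g ((2:ℂ) ^ n • a) with hs
  set r : ℝ := max 2⁻¹ (Q / 2) with hrdef
  have hhalf : ((2:ℝ)⁻¹ : ℝ) ≤ r := le_max_left _ _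
  have hQ2r : Q / 2 ≤ r := le_max_right _ _
  have hr0 : (0:ℝ) ≤ r := le_trans (by norm_num) hhalf
  have hr1 : r < 1 := by
    rw [hrdef]
    apply max_lt (by norm_num)
    linarith
  have hstep : ∀ (n : ℕ) (a : A),
      ‖s (n+1) a - s n a‖ ≤ (θ * ‖(1:A)‖ ^ p + θ * ‖a‖ ^ p) * r ^ n := by
    intro n a
    have h2n : ((2:ℂ) ^ (n+1))⁻¹ * 2 = ((2:ℂ) ^ n)⁻¹ := by
      rw [pow_succ]
      have h2 : (2:ℂ) ≠ 0 := two_ne_zero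
      field_simp
    have e : s (n+1) a - s n a
        = ((2:ℂ) ^ (n+1))⁻¹ • (g ((2:ℂ) ^ (n+1) • a) - (2:ℂ) • g ((2:ℂ) ^ n • a)) := by
      simp only [hs]
      rw [smul_sub, smul_smul, h2n]
    have edup : (2:ℂ) ^ (n+1) • a = (2:ℂ) ^ n • a + (2:ℂ) ^ n • a := by
      rw [← add_smul]
      norm_num
      ring
    have hin : ‖g ((2:ℂ) ^ (n+1) • a) - (2:ℂ) • g ((2:ℂ) ^ n • a)‖
        ≤ θ * (‖(1:A)‖ ^ p + 2 * (Q ^ n * ‖a‖ ^ p)) := by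
      have hb := hgadd ((2:ℂ) ^ n • a) ((2:ℂ) ^ n • a)
      rw [hscale] at hb
      calc ‖g ((2:ℂ) ^ (n+1) • a) - (2:ℂ) • g ((2:ℂ) ^ n • a)‖
          = ‖g ((2:ℂ) ^ n • a + (2:ℂ) ^ n • a) - g ((2:ℂ) ^ n • a) - g ((2:ℂ) ^ n • a)‖ := by
            rw [edup, two_smul]
            congr 1
            abel
        _ ≤ θ * (‖(1:A)‖ ^ p + Q ^ n * ‖a‖ ^ p + Q ^ n * ‖a‖ ^ p) := hb
        _ = θ * (‖(1:A)‖ ^ p + 2 * (Q ^ n * ‖a‖ ^ p)) := by ring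
    have k1 : ((2:ℝ) ^ (n+1))⁻¹ ≤ r ^ n := by
      rw [pow_succ, mul_inv, ← inv_pow]
      calc ((2:ℝ)⁻¹) ^ n * 2⁻¹ ≤ ((2:ℝ)⁻¹) ^ n * 1 := by
            apply mul_le_mul_of_nonneg_left (by norm_num) (by positivity)
        _ = ((2:ℝ)⁻¹) ^ n := mul_one _
        _ ≤ r ^ n := pow_le_pow_left₀ (by norm_num) hhalf n
    have k2 : ((2:ℝ) ^ (n+1))⁻¹ * (2 * Q ^ n) ≤ r ^ n := by
      have e2 : ((2:ℝ) ^ (n+1))⁻¹ * (2 * Q ^ n) = (Q / 2) ^ n := by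
        rw [pow_succ, div_pow]
        field_simp
      rw [e2]
      exact pow_le_pow_left₀ (by positivity) hQ2r n
    have hθ1 : 0 ≤ θ * ‖(1:A)‖ ^ p := mul_nonneg hθ hC1
    have hθ2 : 0 ≤ θ * ‖a‖ ^ p := mul_nonneg hθ (Real.rpow_nonneg (norm_nonneg _) p)
    rw [e, norm_smul, norm_inv, hnorm2n]
    calc ((2:ℝ) ^ (n+1))⁻¹ * ‖g ((2:ℂ) ^ (n+1) • a) - (2:ℂ) • g ((2:ℂ) ^ n • a)‖
        ≤ ((2:ℝ) ^ (n+1))⁻¹ * (θ * (‖(1:A)‖ ^ p + 2 * (Q ^ n * ‖a‖ ^ p))) := by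
          apply mul_le_mul_of_nonneg_left hin (by positivity)
      _ = (θ * ‖(1:A)‖ ^ p) * ((2:ℝ) ^ (n+1))⁻¹
            + (θ * ‖a‖ ^ p) * (((2:ℝ) ^ (n+1))⁻¹ * (2 * Q ^ n)) := by ring
      _ ≤ (θ * ‖(1:A)‖ ^ p) * r ^ n + (θ * ‖a‖ ^ p) * r ^ n :=
          add_le_add (mul_le_mul_of_nonneg_left k1 hθ1) (mul_le_mul_of_nonneg_left k2 hθ2)
      _ = (θ * ‖(1:A)‖ ^ p + θ * ‖a‖ ^ p) * r ^ n := by ring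
  have hcauchy : ∀ a : A, CauchySeq (fun n => s n a) := by
    intro a
    apply cauchySeq_of_le_geometric r (θ * ‖(1:A)‖ ^ p + θ * ‖a‖ ^ p) hr1
    intro n
    rw [dist_eq_norm, norm_sub_rev]
    exact hstep n a
  have hconv : ∀ a : A, ∃ L : X, Tendsto (fun n => s n a) atTop (𝓝 L) :=
    fun a => cauchySeq_tendsto_of_complete (hcauchy a)
  choose δ hδ using hconv
  -- δ is additive
  have hδadd : ∀ x y : A, δ (x + y) = δ x + δ y := by
    intro x y
    have hb : ∀ n : ℕ, ‖s n (x + y) - (s n x + s n y)‖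
        ≤ ((2:ℝ) ^ n)⁻¹ * (θ * ‖(1:A)‖ ^ p + (θ * (‖x‖ ^ p + ‖y‖ ^ p)) * Q ^ n) := by
      intro n
      have e : s n (x + y) - (s n x + s n y)
          = ((2:ℂ) ^ n)⁻¹ • (g ((2:ℂ) ^ n • x + (2:ℂ) ^ n • y)
              - g ((2:ℂ) ^ n • x) - g ((2:ℂ) ^ n • y)) := by
        simp only [hs, smul_add]
        rw [smul_sub, smul_sub]
        abel
      have hin := hgadd ((2:ℂ) ^ n • x) ((2:ℂ) ^ n • y)
      rw [hscale, hscale] at hin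
      rw [e, norm_smul, norm_inv, hnorm2n]
      calc ((2:ℝ) ^ n)⁻¹ * ‖g ((2:ℂ) ^ n • x + (2:ℂ) ^ n • y)
              - g ((2:ℂ) ^ n • x) - g ((2:ℂ) ^ n • y)‖
          ≤ ((2:ℝ) ^ n)⁻¹ * (θ * (‖(1:A)‖ ^ p + Q ^ n * ‖x‖ ^ p + Q ^ n * ‖y‖ ^ p)) := by
            apply mul_le_mul_of_nonneg_left hin (by positivity)
        _ = ((2:ℝ) ^ n)⁻¹ * (θ * ‖(1:A)‖ ^ p + (θ * (‖x‖ ^ p + ‖y‖ ^ p)) * Q ^ n) := by ring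
    have hv : Tendsto (fun n => s n (x + y)) atTop (𝓝 (δ x + δ y)) :=
      tendsto_of_sub ((hδ x).add (hδ y))
        (tendsto_bound _ _ Q 2 one_lt_two hQ2 hQ0.le) hb
    exact tendsto_nhds_unique (hδ (x + y)) hv
  -- δ is unit-homogeneous
  have hδunit : ∀ (μ : ℂ), ‖μ‖ = 1 → ∀ c : A, δ (μ • c) = μ • δ c := by
    intro μ hμ c
    have hb : ∀ n : ℕ, ‖s n (μ • c) - μ • s n c‖
        ≤ ((2:ℝ) ^ n)⁻¹ * (θ * ((0:ℝ) ^ p + (0:ℝ) ^ p) + (θ * ‖c‖ ^ p) * Q ^ n) := by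
      intro n
      have e : s n (μ • c) - μ • s n c
          = ((2:ℂ) ^ n)⁻¹ • (g (μ • ((2:ℂ) ^ n • c)) - μ • g ((2:ℂ) ^ n • c)) := by
        simp only [hs]
        rw [smul_comm ((2:ℂ) ^ n) μ c, smul_sub, smul_comm ((2:ℂ) ^ n)⁻¹ μ]
      have hin := hgmu μ hμ ((2:ℂ) ^ n • c)
      rw [hscale] at hin
      rw [e, norm_smul, norm_inv, hnorm2n]
      calc ((2:ℝ) ^ n)⁻¹ * ‖g (μ • ((2:ℂ) ^ n • c)) - μ • g ((2:ℂ) ^ n • c)‖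
          ≤ ((2:ℝ) ^ n)⁻¹ * (θ * ((0:ℝ) ^ p + (0:ℝ) ^ p + Q ^ n * ‖c‖ ^ p)) := by
            apply mul_le_mul_of_nonneg_left hin (by positivity)
        _ = ((2:ℝ) ^ n)⁻¹ * (θ * ((0:ℝ) ^ p + (0:ℝ) ^ p) + (θ * ‖c‖ ^ p) * Q ^ n) := by ring
    have hv : Tendsto (fun n => s n (μ • c)) atTop (𝓝 (μ • δ c)) :=
      tendsto_of_sub ((hδ c).const_smul μ)
        (tendsto_bound _ _ Q 2 one_lt_two hQ2 hQ0.le) hb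
    exact tendsto_nhds_unique (hδ (μ • c)) hv
  have hδlin : ∀ (μ : ℂ) (x : A), δ (μ • x) = μ • δ x :=
    fun μ x => clinear_of_unit δ hδadd hδunit μ x
  -- auxiliary power identities
  have hpowinv : ∀ n : ℕ, ((2:ℂ) ^ (2*n))⁻¹ * (2:ℂ) ^ n = ((2:ℂ) ^ n)⁻¹ := by
    intro n
    rw [two_mul, pow_add]
    have h2 : ((2:ℂ) ^ n) ≠ 0 := pow_ne_zero _ two_ne_zero
    field_simp
  -- δ is a Jordan derivation
  have hδjordan : ∀ a : A, δ (a * a) = a • δ a + op a • δ a := by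
    intro a
    have htwo : Tendsto (fun n : ℕ => 2 * n) atTop atTop := by
      apply tendsto_atTop_mono (f := fun n : ℕ => n) (fun n => by show n ≤ 2*n; omega) tendsto_id
    have hv2 : Tendsto (fun n => s (2*n) (a*a)) atTop (𝓝 (δ (a*a))) := (hδ (a*a)).comp htwo
    have hu : Tendsto (fun n => a • s n a + op a • s n a) atTop
        (𝓝 (a • δ a + op a • δ a)) :=
      ((hδ a).const_smul a).add ((hδ a).const_smul (op a))
    have hb : ∀ n : ℕ, ‖s (2*n) (a*a) - (a • s n a + op a • s n a)‖
        ≤ ((4:ℝ) ^ n)⁻¹ * (θ * (0:ℝ) ^ p + (θ * (2 * ‖a‖ ^ p)) * Q ^ n) := by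
      intro n
      have hxx : ((2:ℂ) ^ n • a) * ((2:ℂ) ^ n • a) = (2:ℂ) ^ (2*n) • (a * a) := by
        rw [smul_mul_smul_comm, ← pow_add, two_mul]
      have c1 : ((2:ℂ) ^ (2*n))⁻¹ • (((2:ℂ) ^ n • a) • g ((2:ℂ) ^ n • a)) = a • s n a := by
        rw [smul_assoc, smul_smul, hpowinv, hcomm]
      have c2 : ((2:ℂ) ^ (2*n))⁻¹ • (op ((2:ℂ) ^ n • a) • g ((2:ℂ) ^ n • a))
          = op a • s n a := by
        rw [MulOpposite.op_smul, smul_assoc, smul_smul, hpowinv, hcommop]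
      have e : s (2*n) (a*a) - (a • s n a + op a • s n a)
          = ((2:ℂ) ^ (2*n))⁻¹ • (g (((2:ℂ) ^ n • a) * ((2:ℂ) ^ n • a))
              - ((2:ℂ) ^ n • a) • g ((2:ℂ) ^ n • a)
              - op ((2:ℂ) ^ n • a) • g ((2:ℂ) ^ n • a)) := by
        rw [smul_sub, smul_sub, c1, c2]
        simp only [hs, hxx]
        abel
      have hin := hgjordan ((2:ℂ) ^ n • a)
      rw [hscale] at hin
      have h4 : ((2:ℝ) ^ (2*n)) = (4:ℝ) ^ n := by
        rw [pow_mul]; norm_num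
      rw [e, norm_smul, norm_inv, hnorm2n, h4]
      calc ((4:ℝ) ^ n)⁻¹ * ‖g (((2:ℂ) ^ n • a) * ((2:ℂ) ^ n • a))
              - ((2:ℂ) ^ n • a) • g ((2:ℂ) ^ n • a)
              - op ((2:ℂ) ^ n • a) • g ((2:ℂ) ^ n • a)‖
          ≤ ((4:ℝ) ^ n)⁻¹ * (θ * (Q ^ n * ‖a‖ ^ p + Q ^ n * ‖a‖ ^ p + (0:ℝ) ^ p)) := by
            apply mul_le_mul_of_nonneg_left hin (by positivity)
        _ = ((4:ℝ) ^ n)⁻¹ * (θ * (0:ℝ) ^ p + (θ * (2 * ‖a‖ ^ p)) * Q ^ n) := by ring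
    have hv' : Tendsto (fun n => s (2*n) (a*a)) atTop (𝓝 (a • δ a + op a • δ a)) :=
      tendsto_of_sub hu (tendsto_bound _ _ Q 4 (by norm_num) (by linarith) hQ0.le) hb
    exact tendsto_nhds_unique hv2 hv'
  -- the generalized Jordan identity for f
  have hfjordan : ∀ a : A, f (a * a) = a • f a + op a • δ a := by
    intro a
    have hb : ∀ n : ℕ, ‖f (a*a) - (a • f a + op a • s n a)‖
        ≤ ((2:ℝ) ^ n)⁻¹ * (θ * ‖f a‖ + 0 * Q ^ n) := by
      intro n
      have h := h1 0 0 ((2:ℂ) ^ n • a) 1 (by norm_num)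
      simp only [one_smul, zero_add, add_zero, smul_zero, hf0, sub_zero] at h
      -- h : ‖f (((2:ℂ)^n • a)^2) - ((2:ℂ)^n • a) • f ((2:ℂ)^n • a)
      --        - op ((2:ℂ)^n • a) • g ((2:ℂ)^n • a)‖ ≤ θ * ‖f ((2:ℂ)^n • a)‖
      have hx2 : ((2:ℂ) ^ n • a) ^ 2 = (2:ℂ) ^ (2*n) • (a * a) := by
        rw [sq, smul_mul_smul_comm, ← pow_add, two_mul]
      have hfx : f ((2:ℂ) ^ n • a) = (2:ℂ) ^ n • f a := hflin _ _
      have c0 : ((2:ℂ) ^ (2*n))⁻¹ • f (((2:ℂ) ^ n • a) ^ 2) = f (a*a) := by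
        rw [hx2, hflin, smul_smul, inv_mul_cancel₀ (pow_ne_zero _ two_ne_zero), one_smul]
      have c1 : ((2:ℂ) ^ (2*n))⁻¹ • (((2:ℂ) ^ n • a) • f ((2:ℂ) ^ n • a)) = a • f a := by
        rw [hfx, smul_assoc, hcomm, smul_smul, hpowinv, smul_smul,
          inv_mul_cancel₀ (pow_ne_zero _ two_ne_zero), one_smul]
      have c2 : ((2:ℂ) ^ (2*n))⁻¹ • (op ((2:ℂ) ^ n • a) • g ((2:ℂ) ^ n • a))
          = op a • s n a := by
        rw [MulOpposite.op_smul, smul_assoc, smul_smul, hpowinv, hcommop]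
      have e : f (a*a) - (a • f a + op a • s n a)
          = ((2:ℂ) ^ (2*n))⁻¹ • (f (((2:ℂ) ^ n • a) ^ 2)
              - ((2:ℂ) ^ n • a) • f ((2:ℂ) ^ n • a)
              - op ((2:ℂ) ^ n • a) • g ((2:ℂ) ^ n • a)) := by
        rw [smul_sub, smul_sub, c0, c1, c2]
        abel
      rw [e, norm_smul, norm_inv, hnorm2n]
      have hfxn : ‖f ((2:ℂ) ^ n • a)‖ = 2 ^ n * ‖f a‖ := by
        rw [hfx, norm_smul, hnorm2n]
      calc ((2:ℝ) ^ (2*n))⁻¹ * ‖f (((2:ℂ) ^ n • a) ^ 2)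
              - ((2:ℂ) ^ n • a) • f ((2:ℂ) ^ n • a)
              - op ((2:ℂ) ^ n • a) • g ((2:ℂ) ^ n • a)‖
          ≤ ((2:ℝ) ^ (2*n))⁻¹ * (θ * ‖f ((2:ℂ) ^ n • a)‖) := by
            apply mul_le_mul_of_nonneg_left h (by positivity)
        _ = ((2:ℝ) ^ n)⁻¹ * (θ * ‖f a‖ + 0 * Q ^ n) := by
            rw [hfxn, two_mul, pow_add]
            have h2 : ((2:ℝ) ^ n) ≠ 0 := by positivity
            field_simp
            ring
    have hu : Tendsto (fun n => a • f a + op a • s n a) atTop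
        (𝓝 (a • f a + op a • δ a)) :=
      tendsto_const_nhds.add ((hδ a).const_smul (op a))
    have hv : Tendsto (fun n : ℕ => f (a*a)) atTop (𝓝 (a • f a + op a • δ a)) :=
      tendsto_of_sub hu (tendsto_bound _ _ Q 2 one_lt_two hQ2 hQ0.le) hb
    exact tendsto_nhds_unique tendsto_const_nhds hv
  exact ⟨hfadd, hflin, δ, ⟨hδadd, hδlin, fun a => by rw [sq]; exact hδjordan a⟩,
    fun a => by rw [sq]; exact hfjordan a⟩

end
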